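/- For a subset I ⊆ {1, 2, 3, ...} let G_I be the group presented by generators a, t, z and relations a² = 1, z² = 1, [z,a] = 1, [z,t] = 1, together with, for each integer n ≥ 1: the relation [tⁿ a t⁻ⁿ, a] = 1 if n ∈ I, and the relation [tⁿ a t⁻ⁿ, a] = z if n ∉ I. Then for all subsets I, J ⊆ {1, 2, 3, ...}, the groups G_I and G_J are isomorphic if and only if I = J. -/

import Mathlib

open LaurentPolynomial


namespace Stmt6

open scoped commutatorElement

/-- The generator `a` of the free group on three letters. -/
def a : FreeGroup (Fin 3) := FreeGroup.of 0

/-- The generator `t` of the free group on three letters. -/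
def t : FreeGroup (Fin 3) := FreeGroup.of 1

/-- The generator `z` of the free group on three letters. -/
def z : FreeGroup (Fin 3) := FreeGroup.of 2

/-- The relators of `G_I`, for `I ⊆ {1, 2, 3, ...}`: `a² = z² = [z,a] = [z,t] = 1`, and
for each `n ≥ 1` the relator `[tⁿat⁻ⁿ, a]` if `n ∈ I`, and `[tⁿat⁻ⁿ, a]·z⁻¹`
(i.e. the relation `[tⁿat⁻ⁿ, a] = z`) if `n ∉ I`. -/
def rels (I : Set ℕ+) : Set (FreeGroup (Fin 3)) :=
  {a ^ 2, z ^ 2, ⁅z, a⁆, ⁅z, t⁆}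
    ∪ (fun n : ℕ+ => ⁅t ^ (n : ℕ) * a * (t ^ (n : ℕ))⁻¹, a⁆) '' I
    ∪ (fun n : ℕ+ => ⁅t ^ (n : ℕ) * a * (t ^ (n : ℕ))⁻¹, a⁆ * z⁻¹) '' Iᶜ

/-- The group `G_I`, a central extension of the lamplighter group `ℤ/2 ≀ ℤ` twisted
according to the subset `I ⊆ {1, 2, 3, ...}`. -/
def G (I : Set ℕ+) := PresentedGroup (rels I)

instance (I : Set ℕ+) : Group (G I) := inferInstanceAs (Group (PresentedGroup (rels I)))

noncomputable def gmk (I : Set ℕ+) : FreeGroup (Fin 3) →* G I := PresentedGroup.mk (rels I)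
abbrev LP := LaurentPolynomial (ZMod 2)
noncomputable def sg (i : ℤ) (x : ZMod 2) : LP := AddMonoidAlgebra.single i x

open Classical in
noncomputable def eps (J : Set ℕ+) (d : ℤ) : ZMod 2 :=
  if ∃ n : ℕ+, (d = (n:ℤ) ∨ d = -(n:ℤ)) ∧ n ∉ J then 1 else 0

noncomputable def phi (J : Set ℕ+) (i j : ℤ) : ZMod 2 := if j < i then eps J (i - j) else 0

noncomputable def cm (J : Set ℕ+) : LP →ₗ[ZMod 2] LP →ₗ[ZMod 2] ZMod 2 :=
  (Finsupp.lsum (ZMod 2) fun i => LinearMap.toSpanSingleton (ZMod 2) _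
    ((Finsupp.lsum (ZMod 2) fun j => LinearMap.toSpanSingleton (ZMod 2) (ZMod 2) (phi J i j)).comp
      (AddMonoidAlgebra.coeffLinearEquiv (ZMod 2)).toLinearMap)).comp
      (AddMonoidAlgebra.coeffLinearEquiv (ZMod 2)).toLinearMap

theorem cm_single_single (J : Set ℕ+) (i j : ℤ) (x y : ZMod 2) :
    cm J (sg i x) (sg j y) = x * y * phi J i j := by
  rw [cm, sg, sg, LinearMap.comp_apply]
  erw [Finsupp.lsum_single, LinearMap.toSpanSingleton_apply]
  rw [LinearMap.smul_apply, LinearMap.comp_apply]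
  erw [Finsupp.lsum_single, LinearMap.toSpanSingleton_apply]
  rw [smul_eq_mul, smul_eq_mul]; ring

theorem T_mul_single (m i : ℤ) (x : ZMod 2) :
    (T m : LP) * sg i x = sg (m + i) x := by
  have h1 : (T m : LP) = sg m 1 := rfl
  rw [h1, sg, sg, sg]
  rw [AddMonoidAlgebra.single_mul_single (R := ZMod 2) (M := ℤ), one_mul]

theorem lp_add_self (f : LP) : f + f = 0 := by
  ext i
  rw [AddMonoidAlgebra.coeff_add, AddMonoidAlgebra.coeff_zero, Finsupp.add_apply, Finsupp.coe_zero, Pi.zero_apply, CharTwo.add_self_eq_zero]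

theorem z2_add_self (x : ZMod 2) : x + x = 0 := CharTwo.add_self_eq_zero x

theorem lp_induction {p : LP → Prop} (f : LP) (h0 : p 0)
    (hadd : ∀ f g, p f → p g → p (f + g)) (hs : ∀ i x, p (sg i x)) : p f :=
  AddMonoidAlgebra.induction_linear f h0 (fun a b ha hb => hadd a b ha hb) hs

theorem eps_neg (J : Set ℕ+) (d : ℤ) : eps J (-d) = eps J d := by
  unfold eps
  congr 1
  apply propext
  constructor
  · rintro ⟨n, h1 | h1, h2⟩
    · exact ⟨n, Or.inr (by omega), h2⟩
    · exact ⟨n, Or.inl (by omega), h2⟩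
  · rintro ⟨n, h1 | h1, h2⟩
    · exact ⟨n, Or.inr (by omega), h2⟩
    · exact ⟨n, Or.inl (by omega), h2⟩

theorem eps_zero (J : Set ℕ+) : eps J 0 = 0 := by
  unfold eps
  rw [if_neg]
  rintro ⟨n, h1 | h1, -⟩ <;>
  · have hp : (0:ℤ) < ((n:ℕ):ℤ) := Int.natCast_pos.mpr n.pos
    rw [show ((n:ℤ)) = ((n:ℕ):ℤ) from rfl] at h1
    omega

theorem eps_coe_mem (J : Set ℕ+) {n : ℕ+} (h : n ∈ J) : eps J (n : ℤ) = 0 := by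
  unfold eps
  rw [if_neg]
  rintro ⟨n', h1 | h1, h2⟩
  · exact h2 ((by exact_mod_cast h1 : n = n') ▸ h)
  · have hp : (0:ℤ) < ((n:ℕ):ℤ) := Int.natCast_pos.mpr n.pos
    have hq : (0:ℤ) < ((n':ℕ):ℤ) := Int.natCast_pos.mpr n'.pos
    rw [show ((n:ℤ)) = ((n:ℕ):ℤ) from rfl, show ((n':ℤ)) = ((n':ℕ):ℤ) from rfl] at h1
    omega

theorem eps_coe_not_mem (J : Set ℕ+) {n : ℕ+} (h : n ∉ J) : eps J (n : ℤ) = 1 := by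
  unfold eps
  exact if_pos ⟨n, Or.inl rfl, h⟩

theorem phi_shift (J : Set ℕ+) (m i j : ℤ) : phi J (m + i) (m + j) = phi J i j := by
  unfold phi
  rw [show (m + i) - (m + j) = i - j by ring]
  simp only [add_lt_add_iff_left]

theorem cm_add_left (J : Set ℕ+) (f f' g : LP) :
    cm J (f + f') g = cm J f g + cm J f' g := by rw [map_add]; rfl
theorem cm_add_right (J : Set ℕ+) (f g g' : LP) :
    cm J f (g + g') = cm J f g + cm J f g' := map_add _ _ _
theorem cm_zero_left (J : Set ℕ+) (g : LP) : cm J 0 g = 0 := by rw [map_zero]; rfl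
theorem cm_zero_right (J : Set ℕ+) (f : LP) : cm J f 0 = 0 := map_zero _

theorem cm_Tmul (J : Set ℕ+) (m : ℤ) (f g : LP) :
    cm J ((T m : LP) * f) ((T m : LP) * g) = cm J f g := by
  revert g
  refine lp_induction (p := fun f => ∀ g, cm J ((T m : LP) * f) ((T m : LP) * g) = cm J f g)
    f ?_ ?_ ?_
  · intro g; rw [mul_zero, cm_zero_left, cm_zero_left]
  · intro f₁ f₂ h1 h2 g; rw [mul_add, cm_add_left, cm_add_left, h1, h2]
  · intro i x g
    refine lp_induction
      (p := fun g => cm J ((T m : LP) * sg i x) ((T m : LP) * g) = cm J (sg i x) g) g ?_ ?_ ?_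
    · beta_reduce; rw [mul_zero, cm_zero_right, cm_zero_right]
    · intro g₁ g₂ h1 h2; beta_reduce at h1 h2 ⊢; rw [mul_add, cm_add_right, cm_add_right, h1, h2]
    · intro j y
      beta_reduce
      rw [T_mul_single, T_mul_single, cm_single_single, cm_single_single, phi_shift]

theorem B_single (J : Set ℕ+) (i j : ℤ) :
    cm J (sg i 1) (sg j 1) + cm J (sg j 1) (sg i 1) = eps J (i - j) := by
  rw [cm_single_single, cm_single_single]
  simp only [one_mul]
  unfold phi
  rcases lt_trichotomy i j with h | h | h
  · rw [if_neg (by omega), if_pos h, zero_add, show j - i = -(i-j) by ring, eps_neg]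
  · subst h; rw [if_neg (by omega), add_zero, sub_self, eps_zero]
  · rw [if_pos h, if_neg (by omega), add_zero]

def M (_J : Set ℕ+) := LP × ℤ × ZMod 2

noncomputable instance Mgroup (J : Set ℕ+) : Group (M J) where
  mul x y := (x.1 + T x.2.1 * y.1, x.2.1 + y.2.1,
    x.2.2 + y.2.2 + cm J x.1 (T x.2.1 * y.1))
  one := (0, 0, 0)
  inv x := (T (-x.2.1) * x.1, -x.2.1,
    x.2.2 + cm J ((T (-x.2.1) : LP) * x.1) ((T (-x.2.1) : LP) * x.1))
  mul_assoc x y zz := by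
    obtain ⟨f, m, u⟩ := x; obtain ⟨g, n, v⟩ := y; obtain ⟨h, p, w⟩ := zz
    refine Prod.ext ?_ (Prod.ext ?_ ?_)
    · show (f + T m * g) + T (m + n) * h = f + T m * (g + T n * h)
      rw [T_add, mul_add, mul_assoc]; ring
    · show (m + n) + p = m + (n + p); ring
    · show (u + v + cm J f (T m * g)) + w + cm J (f + T m * g) (T (m+n) * h)
        = u + (v + w + cm J g (T n * h)) + cm J f (T m * (g + T n * h))
      rw [cm_add_left, T_add, mul_assoc, cm_Tmul, mul_add, cm_add_right, ← mul_assoc, ← T_add]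
      abel
  one_mul x := by
    obtain ⟨f, m, u⟩ := x
    refine Prod.ext ?_ (Prod.ext ?_ ?_)
    · show 0 + T 0 * f = f; rw [T_zero, one_mul, zero_add]
    · show 0 + m = m; ring
    · show 0 + u + cm J 0 (T 0 * f) = u; rw [cm_zero_left, zero_add, add_zero]
  mul_one x := by
    obtain ⟨f, m, u⟩ := x
    refine Prod.ext ?_ (Prod.ext ?_ ?_)
    · show f + T m * 0 = f; rw [mul_zero, add_zero]
    · show m + 0 = m; ring
    · show u + 0 + cm J f (T m * 0) = u; rw [mul_zero, cm_zero_right, add_zero, add_zero]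
  inv_mul_cancel x := by
    obtain ⟨f, m, u⟩ := x
    refine Prod.ext ?_ (Prod.ext ?_ ?_)
    · show T (-m) * f + T (-m) * f = 0; exact lp_add_self _
    · show -m + m = 0; ring
    · show (u + cm J ((T (-m) : LP) * f) ((T (-m) : LP) * f)) + u
        + cm J ((T (-m) : LP) * f) ((T (-m) : LP) * f) = 0
      rw [show ∀ a b : ZMod 2, (u + a) + u + b = (u + u) + (a + b) from by intros; ring,
        z2_add_self, z2_add_self, zero_add]

theorem M_mul (J : Set ℕ+) (x y : M J) :
    x * y = (x.1 + T x.2.1 * y.1, x.2.1 + y.2.1,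
      x.2.2 + y.2.2 + cm J x.1 ((T x.2.1 : LP) * y.1)) := rfl

theorem M_one (J : Set ℕ+) : (1 : M J) = (0, 0, 0) := rfl

theorem M_inv (J : Set ℕ+) (x : M J) :
    x⁻¹ = ((T (-x.2.1) : LP) * x.1, -x.2.1,
      x.2.2 + cm J ((T (-x.2.1) : LP) * x.1) ((T (-x.2.1) : LP) * x.1)) := rfl

noncomputable def A0 (J : Set ℕ+) : M J := (sg 0 1, 0, 0)
noncomputable def T0 (J : Set ℕ+) : M J := (0, 1, 0)
noncomputable def Z0 (J : Set ℕ+) : M J := (0, 0, 1)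

theorem Z0_mul (J : Set ℕ+) (x : M J) : Z0 J * x = (x.1, x.2.1, x.2.2 + 1) := by
  obtain ⟨f, m, u⟩ := x
  erw [Z0, M_mul]
  simp only [T_zero, one_mul, zero_add, cm_zero_left, add_zero]
  rw [show (1 : ZMod 2) + u = u + 1 from by ring]

theorem mul_Z0 (J : Set ℕ+) (x : M J) : x * Z0 J = (x.1, x.2.1, x.2.2 + 1) := by
  obtain ⟨f, m, u⟩ := x
  erw [Z0, M_mul]
  simp only [mul_zero, add_zero, cm_zero_right]
  rfl

theorem Z0_central (J : Set ℕ+) (x : M J) : Z0 J * x = x * Z0 J := by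
  rw [Z0_mul, mul_Z0]

theorem lp_nsmul2 (f : LP) : (2:ℕ) • f = 0 := by rw [two_smul]; exact lp_add_self f
theorem lp_zsmul2 (f : LP) : (2:ℤ) • f = 0 := by rw [two_smul]; exact lp_add_self f
theorem z2_nsmul2 (x : ZMod 2) : (2:ℕ) • x = 0 := by rw [two_smul]; exact z2_add_self x
theorem z2_zsmul2 (x : ZMod 2) : (2:ℤ) • x = 0 := by rw [two_smul]; exact z2_add_self x

theorem z2_zsmul3 (x : ZMod 2) : (3:ℤ) • x = x := by
  rw [show (3:ℤ) = 2 + 1 from rfl, add_smul, z2_zsmul2, zero_add, one_smul]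
theorem z2_nsmul3 (x : ZMod 2) : (3:ℕ) • x = x := by
  rw [show (3:ℕ) = 2 + 1 from rfl, add_smul, z2_nsmul2, zero_add, one_smul]
theorem lp_zsmul3 (f : LP) : (3:ℤ) • f = f := by
  rw [show (3:ℤ) = 2 + 1 from rfl, add_smul, lp_zsmul2, zero_add, one_smul]

theorem M_comm (J : Set ℕ+) (x y : M J) (hx : x.2.1 = 0) (hy : y.2.1 = 0) :
    ⁅x, y⁆ = ((0:LP), (0:ℤ), cm J x.1 y.1 + cm J y.1 x.1) := by
  show x * y * x⁻¹ * y⁻¹ = _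
  obtain ⟨p, mx, u⟩ := x
  obtain ⟨q, my, v⟩ := y
  have h1 : mx = 0 := hx
  have h2 : my = 0 := hy
  subst h1
  subst h2
  erw [M_mul, M_mul, M_mul, M_inv, M_inv]
  simp only [neg_zero, T_zero, one_mul, add_zero, zero_add, Prod.mk.injEq]
  refine Prod.ext ?_ (Prod.ext ?_ ?_)
  · show p + q + p + q = 0
    abel_nf
    simp only [lp_zsmul2, lp_nsmul2, zero_add, add_zero]
  · rfl
  · show u + v + cm J p q + (u + cm J p p) + cm J (p + q) p + (v + cm J q q)
        + cm J (p + q + p) q = cm J p q + cm J q p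
    rw [cm_add_left, show p + q + p = p + (q + p) from by ring, cm_add_left, cm_add_left]
    abel_nf
    simp only [z2_zsmul2, z2_nsmul2, z2_zsmul3, z2_nsmul3, zero_add, add_zero]

theorem M_Tpow (J : Set ℕ+) (k : ℕ) : (T0 J) ^ k = ((0, (k:ℤ), 0) : M J) := by
  induction k with
  | zero => rw [pow_zero, M_one]; norm_num; rfl
  | succ n ih =>
    erw [pow_succ, ih, T0, M_mul]
    simp only [mul_zero, add_zero, cm_zero_right]
    norm_num
    rfl

theorem M_conj (J : Set ℕ+) (σ x : M J) (hx : x.2.1 = 0) :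
    σ * x * σ⁻¹ = ((T σ.2.1 : LP) * x.1, 0, (σ * x * σ⁻¹).2.2) := by
  obtain ⟨h, m, w⟩ := σ
  obtain ⟨p, m0, v⟩ := x
  have hm0 : m0 = 0 := hx
  subst hm0
  refine Prod.ext ?_ (Prod.ext ?_ rfl)
  · show (h + T m * p) + T (m + 0) * ((T (-m) : LP) * h) = (T m : LP) * p
    rw [add_zero, show (T m : LP) * ((T (-m) : LP) * h) = ((T m : LP) * (T (-m) : LP)) * h
      from by ring, ← T_add, add_neg_cancel, T_zero, one_mul]
    rw [show h + T m * p + h = T m * p + (h + h) from by ring, lp_add_self, add_zero]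
  · show m + 0 + -m = 0
    ring

noncomputable def gens (J : Set ℕ+) : Fin 3 → M J := ![A0 J, T0 J, Z0 J]

theorem Z0_inv (J : Set ℕ+) : (Z0 J)⁻¹ = Z0 J := by
  erw [Z0, M_inv]
  simp only [neg_zero, T_zero, one_mul, mul_zero, cm_zero_left, cm_zero_right, add_zero]
  rfl

theorem A0_sq (J : Set ℕ+) : A0 J * A0 J = 1 := by
  erw [A0, M_mul]
  simp only [T_zero, one_mul, add_zero, zero_add]
  rw [lp_add_self, cm_single_single, M_one]
  norm_num [phi]
  rfl

theorem Z0_sq (J : Set ℕ+) : Z0 J * Z0 J = 1 := by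
  erw [Z0, M_mul]
  simp only [mul_zero, add_zero, zero_add, cm_zero_right, M_one]
  refine Prod.ext rfl (Prod.ext rfl ?_)
  decide

theorem xn_eq (J : Set ℕ+) (n : ℕ) :
    ∃ s, (T0 J) ^ n * A0 J * ((T0 J) ^ n)⁻¹ = ((sg (n:ℤ) 1, 0, s) : M J) := by
  refine ⟨((T0 J) ^ n * A0 J * ((T0 J) ^ n)⁻¹).2.2, ?_⟩
  have h := M_conj J ((T0 J)^n) (A0 J) rfl
  rw [M_Tpow] at h ⊢
  rw [h]
  show ((T (n:ℤ) : LP) * sg 0 1, _, _) = _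
  rw [T_mul_single, add_zero]

theorem comm_xn (J : Set ℕ+) (n : ℕ) :
    ⁅(T0 J) ^ n * A0 J * ((T0 J) ^ n)⁻¹, A0 J⁆ = ((0, 0, eps J (n:ℤ)) : M J) := by
  obtain ⟨s, hs⟩ := xn_eq J n
  rw [hs]
  erw [M_comm J _ _ rfl rfl]
  show ((0:LP), (0:ℤ), cm J (sg (n:ℤ) 1) (sg 0 1) + cm J (sg 0 1) (sg (n:ℤ) 1)) = _
  rw [B_single, sub_zero]

theorem lift_rels (J : Set ℕ+) : ∀ r ∈ rels J, FreeGroup.lift (gens J) r = 1 := by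
  intro r hr
  have hA : FreeGroup.lift (gens J) a = A0 J := by rw [a, FreeGroup.lift_apply_of]; rfl
  have hT : FreeGroup.lift (gens J) t = T0 J := by rw [t, FreeGroup.lift_apply_of]; rfl
  have hZ : FreeGroup.lift (gens J) z = Z0 J := by rw [z, FreeGroup.lift_apply_of]; rfl
  rcases hr with (hr | hr) | hr
  · simp only [Set.mem_insert_iff, Set.mem_singleton_iff] at hr
    rcases hr with rfl | rfl | rfl | rfl
    · rw [map_pow, hA, pow_two, A0_sq]
    · rw [map_pow, hZ, pow_two, Z0_sq]
    · rw [map_commutatorElement, hA, hZ, commutatorElement_eq_one_iff_mul_comm, Z0_central]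
    · rw [map_commutatorElement, hT, hZ, commutatorElement_eq_one_iff_mul_comm, Z0_central]
  · obtain ⟨n, hn, rfl⟩ := hr
    rw [map_commutatorElement, map_mul, map_mul, map_inv, map_pow, hA, hT, comm_xn]
    rw [show (((n:ℕ):ℤ)) = ((n:ℤ)) from rfl, eps_coe_mem J hn, M_one]
  · obtain ⟨n, hn, rfl⟩ := hr
    rw [map_mul, map_inv, hZ, map_commutatorElement, map_mul, map_mul, map_inv, map_pow, hA, hT,
      comm_xn, show (((n:ℕ):ℤ)) = ((n:ℤ)) from rfl, eps_coe_not_mem J hn, Z0_inv]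
    erw [mul_Z0]
    rw [M_one]
    refine Prod.ext rfl (Prod.ext rfl ?_)
    decide

noncomputable def piJ (J : Set ℕ+) : G J →* M J := PresentedGroup.toGroup (lift_rels J)

theorem piJ_a (J : Set ℕ+) : piJ J (PresentedGroup.mk (rels J) a) = A0 J := by
  rw [a]
  exact PresentedGroup.toGroup.of (lift_rels J)

theorem piJ_t (J : Set ℕ+) : piJ J (PresentedGroup.mk (rels J) t) = T0 J := by
  rw [t]; exact PresentedGroup.toGroup.of (lift_rels J)

theorem piJ_z (J : Set ℕ+) : piJ J (PresentedGroup.mk (rels J) z) = Z0 J := by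
  rw [z]; exact PresentedGroup.toGroup.of (lift_rels J)

theorem Tfix (f : LP) (h : (T 1 : LP) * f = f) : f = 0 := by
  by_contra hf
  have hne : f.coeff.support.Nonempty :=
    Finsupp.support_nonempty_iff.mpr (fun h => hf (AddMonoidAlgebra.coeff_eq_zero.mp h))
  obtain ⟨i, hi⟩ := hne
  have key : ∀ k : ℕ, f.coeff (i + k) ≠ 0 := by
    intro k
    induction k with
    | zero => simpa using Finsupp.mem_support_iff.mp hi
    | succ k ih =>
      have h2 : f.coeff (i + (k+1) : ℤ) = ((T 1 : LP) * f).coeff (i + (k+1) : ℤ) := by rw [h]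
      have h3 : ((T 1 : LP) * f).coeff (i + (k+1) : ℤ) = 1 * f.coeff (-1 + (i + (k+1) : ℤ)) := by
        have := AddMonoidAlgebra.coeff_single_mul_apply (R := ZMod 2) (G := ℤ)
          f (1 : ZMod 2) 1 (i + (k+1) : ℤ)
        exact this
      rw [h3, one_mul, show (-1 + (i + (k+1) : ℤ)) = i + k from by push_cast; ring] at h2
      push_cast
      rw [h2]
      exact ih
  have hinf : (↑f.coeff.support : Set ℤ).Infinite := by
    refine Set.infinite_of_injective_forall_mem (f := fun k : ℕ => i + (k:ℤ)) ?_ ?_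
    · intro k1 k2 hk; simpa using hk
    · intro k; exact Finsupp.mem_support_iff.mpr (key k)
  exact hinf f.coeff.support.finite_toSet

theorem z2_cases (v : ZMod 2) : v = 0 ∨ v = 1 := by revert v; decide

theorem central_form (J : Set ℕ+) (x : M J) (hT : x * T0 J = T0 J * x)
    (hA : x * A0 J = A0 J * x) : x = 1 ∨ x = Z0 J := by
  obtain ⟨f, m, u⟩ := x
  erw [T0, M_mul, M_mul] at hT
  simp only [mul_zero, add_zero, cm_zero_right, cm_zero_left, T_zero, one_mul, zero_add] at hT
  have hf : f = 0 := Tfix f (congrArg Prod.fst hT).symm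
  subst hf
  erw [A0, M_mul, M_mul] at hA
  simp only [mul_zero, add_zero, cm_zero_right, cm_zero_left, T_zero, one_mul, zero_add] at hA
  have hm : sg (m + 0) 1 = sg 0 1 := by
    have h1 : (T m : LP) * sg 0 1 = sg 0 1 := congrArg Prod.fst hA
    rw [T_mul_single] at h1
    exact h1
  have hm0 : m = 0 := by
    have := (AddMonoidAlgebra.single_left_inj (one_ne_zero)).mp hm
    omega
  subst hm0
  rcases z2_cases u with rfl | rfl
  · left; rfl
  · right; rfl

theorem lp_unit_sg {g : LP} (h : IsUnit g) : ∃ k : ℤ, g = sg k 1 := by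
  obtain ⟨u', hu⟩ := h
  have hginv : g * ((u'⁻¹ : LPˣ) : LP) = 1 := by rw [← hu]; exact u'.mul_inv
  set v : LP := ((u'⁻¹ : LPˣ) : LP) with hv
  obtain ⟨n1, g', hg⟩ := exists_T_pow g
  obtain ⟨n2, v', hv'⟩ := exists_T_pow v
  have hmul : Polynomial.toLaurent (g' * v') = Polynomial.toLaurent (Polynomial.X ^ (n1 + n2) : Polynomial (ZMod 2)) := by
    rw [map_mul, hg, hv', Polynomial.toLaurent_X_pow]
    push_cast
    rw [T_add]
    rw [show g * T (n1:ℤ) * (v * T (n2:ℤ)) = (g * v) * (T (n1:ℤ) * T (n2:ℤ)) from by ring,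
      hginv, one_mul]
  have hgv : g' * v' = Polynomial.X ^ (n1 + n2) := Polynomial.toLaurent_injective hmul
  have hdvd : g' ∣ Polynomial.X ^ (n1 + n2) := ⟨v', hgv.symm⟩
  obtain ⟨i, hile, w, hw⟩ := (dvd_prime_pow Polynomial.prime_X _).mp hdvd
  have hw1 : (w : Polynomial (ZMod 2)) = 1 := by
    obtain ⟨r, hr, hCr⟩ := Polynomial.isUnit_iff.mp w.isUnit
    rcases z2_cases r with rfl | rfl
    · exact absurd rfl hr.ne_zero
    · rw [← hCr, Polynomial.C_1]
  have hgX : g' = Polynomial.X ^ i := by rw [← hw, hw1, mul_one]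
  have hg2 : g = Polynomial.toLaurent g' * T (-(n1:ℤ)) := by
    rw [hg, mul_assoc, ← T_add, add_neg_cancel, T_zero, mul_one]
  refine ⟨(i:ℤ) - (n1:ℤ), ?_⟩
  rw [hg2, hgX, Polynomial.toLaurent_X_pow, ← T_add, ← sub_eq_add_neg]
  rfl

theorem G_gen (I : Set ℕ+) (P : Subgroup (G I))
    (ha : gmk I a ∈ P) (ht : gmk I t ∈ P)
    (hz : gmk I z ∈ P) (x : G I) : x ∈ P := by
  obtain ⟨w, rfl⟩ := PresentedGroup.mk_surjective (rels I) x
  induction w using FreeGroup.induction_on with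
  | C1 => rw [map_one]; exact one_mem P
  | of i =>
    fin_cases i
    · exact ha
    · exact ht
    · exact hz
  | inv_of i hw => rw [map_inv]; exact inv_mem hw
  | mul w1 w2 h1 h2 => rw [map_mul]; exact mul_mem h1 h2

noncomputable def mk3 (J : Set ℕ+) (f : LP) (m : ℤ) (u : ZMod 2) : M J := (f, m, u)

theorem mk3_mul (J : Set ℕ+) (f g : LP) (m n : ℤ) (u v : ZMod 2) :
    mk3 J f m u * mk3 J g n v = mk3 J (f + T m * g) (m + n) (u + v + cm J f ((T m : LP) * g)) :=
  rfl

theorem mk3_inv (J : Set ℕ+) (f : LP) (m : ℤ) (u : ZMod 2) :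
    (mk3 J f m u)⁻¹ = mk3 J ((T (-m) : LP) * f) (-m)
      (u + cm J ((T (-m) : LP) * f) ((T (-m) : LP) * f)) := rfl

theorem mk3_inj (J : Set ℕ+) {f g : LP} {m n : ℤ} {u v : ZMod 2}
    (h : mk3 J f m u = mk3 J g n v) : f = g ∧ m = n ∧ u = v := by
  erw [mk3, mk3, Prod.mk.injEq, Prod.mk.injEq] at h
  exact ⟨h.1, h.2.1, h.2.2⟩

theorem A0_eq (J : Set ℕ+) : A0 J = mk3 J (sg 0 1) 0 0 := rfl
theorem T0_eq (J : Set ℕ+) : T0 J = mk3 J 0 1 0 := rfl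
theorem Z0_eq (J : Set ℕ+) : Z0 J = mk3 J 0 0 1 := rfl
theorem M_one' (J : Set ℕ+) : (1 : M J) = mk3 J 0 0 0 := rfl

theorem mk3_Z0 (J : Set ℕ+) (f : LP) (m : ℤ) (u : ZMod 2) :
    mk3 J f m u * Z0 J = mk3 J f m (u + 1) := by
  rw [Z0_eq, mk3_mul]
  simp only [mul_zero, add_zero, cm_zero_right]

theorem mk3_conj (J : Set ℕ+) (σ : M J) (p : LP) (v : ZMod 2) :
    ∃ s, σ * mk3 J p 0 v * σ⁻¹ = mk3 J ((T σ.2.1 : LP) * p) 0 s :=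
  ⟨(σ * mk3 J p 0 v * σ⁻¹).2.2, M_conj J σ (mk3 J p 0 v) rfl⟩

theorem mk3_comm (J : Set ℕ+) (p q : LP) (u v : ZMod 2) :
    ⁅mk3 J p 0 u, mk3 J q 0 v⁆ = mk3 J 0 0 (cm J p q + cm J q p) :=
  M_comm J _ _ rfl rfl

theorem M_gen (J : Set ℕ+) (P : Subgroup (M J))
    (hA : A0 J ∈ P) (hT : T0 J ∈ P) (hZ : Z0 J ∈ P) (x : M J) : x ∈ P := by
  have hTm : ∀ m : ℤ, mk3 J 0 m 0 ∈ P := by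
    intro m
    induction m using Int.induction_on with
    | zero => exact one_mem P
    | succ k ih =>
      have h1 : mk3 J 0 ((k:ℤ)+1) 0 = mk3 J 0 (k:ℤ) 0 * T0 J := by
        rw [T0_eq, mk3_mul, mul_zero, add_zero, cm_zero_right, add_zero, add_zero]
      rw [h1]; exact mul_mem ih hT
    | pred k ih =>
      have hTinv : (T0 J)⁻¹ = mk3 J 0 (-1) 0 := by
        rw [T0_eq, mk3_inv, mul_zero, cm_zero_right, add_zero]
      have h1 : mk3 J 0 (-(k:ℤ)-1) 0 = mk3 J 0 (-(k:ℤ)) 0 * (T0 J)⁻¹ := by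
        rw [hTinv, mk3_mul, sub_eq_add_neg]
        simp only [mul_zero, add_zero, cm_zero_right]
      rw [h1]; exact mul_mem ih (inv_mem hT)
  have hsg : ∀ (i : ℤ), mk3 J (sg i 1) 0 0 ∈ P := by
    intro i
    obtain ⟨s, hs⟩ := mk3_conj J (mk3 J 0 i 0) (sg 0 1) 0
    have h2 : (mk3 J 0 i 0).2.1 = i := rfl
    rw [h2, T_mul_single, add_zero] at hs
    have hmem : mk3 J (sg i 1) 0 s ∈ P := by
      rw [← hs, ← A0_eq]
      exact mul_mem (mul_mem (hTm i) hA) (inv_mem (hTm i))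
    rcases z2_cases s with rfl | rfl
    · exact hmem
    · have h5 : mk3 J (sg i 1) 0 (0:ZMod 2) = mk3 J (sg i 1) 0 1 * Z0 J := by
        rw [mk3_Z0, show (1 + 1 : ZMod 2) = 0 from by decide]
      rw [h5]; exact mul_mem hmem hZ
  have hf0 : ∀ f : LP, ∃ u' : ZMod 2, mk3 J f 0 u' ∈ P := by
    intro f
    refine lp_induction (p := fun f => ∃ u' : ZMod 2, mk3 J f 0 u' ∈ P) f ?_ ?_ ?_
    · exact ⟨0, one_mem P⟩
    · rintro f1 f2 ⟨u1, h1⟩ ⟨u2, h2⟩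
      refine ⟨u1 + u2 + cm J f1 f2, ?_⟩
      have h3 : mk3 J f1 0 u1 * mk3 J f2 0 u2 = mk3 J (f1 + f2) 0 (u1 + u2 + cm J f1 f2) := by
        rw [mk3_mul, T_zero, one_mul, add_zero]
      rw [← h3]; exact mul_mem h1 h2
    · intro i x
      rcases z2_cases x with rfl | rfl
      · refine ⟨0, ?_⟩
        have h4 : mk3 J (sg i 0) 0 0 = 1 := by
          rw [M_one', sg, AddMonoidAlgebra.single_zero]
        rw [h4]; exact one_mem P
      · exact ⟨0, hsg i⟩
  obtain ⟨f, m, u⟩ := x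
  obtain ⟨u', hu'⟩ := hf0 f
  have hstep : mk3 J f 0 u' * mk3 J 0 m 0 = mk3 J f m u' := by
    rw [mk3_mul, mul_zero, add_zero, cm_zero_right, add_zero, add_zero, zero_add]
  have hfm : mk3 J f m u' ∈ P := by rw [← hstep]; exact mul_mem hu' (hTm m)
  have hx : (⟨f, m, u⟩ : M J) = mk3 J f m u := rfl
  rw [hx]
  rcases z2_cases u with rfl | rfl <;> rcases z2_cases u' with rfl | rfl
  · exact hfm
  · have h5 : mk3 J f m (0:ZMod 2) = mk3 J f m 1 * Z0 J := by
      rw [mk3_Z0, show (1 + 1 : ZMod 2) = 0 from by decide]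
    rw [h5]; exact mul_mem hfm hZ
  · have h5 : mk3 J f m (1:ZMod 2) = mk3 J f m 0 * Z0 J := by
      rw [mk3_Z0, zero_add]
    rw [h5]; exact mul_mem hfm hZ
  · exact hfm

def Wgrp (g : LP) := (LP ⧸ Ideal.span {g}) × ℤ

noncomputable instance Wgroup (g : LP) : Group (Wgrp g) where
  mul x y := (x.1 + Ideal.Quotient.mk (Ideal.span {g}) (T x.2) * y.1, x.2 + y.2)
  one := (0, 0)
  inv x := (-(Ideal.Quotient.mk (Ideal.span {g}) (T (-x.2)) * x.1), -x.2)
  mul_assoc x y zz := by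
    obtain ⟨q1, m1⟩ := x; obtain ⟨q2, m2⟩ := y; obtain ⟨q3, m3⟩ := zz
    refine Prod.ext ?_ ?_
    · show (q1 + Ideal.Quotient.mk _ (T m1) * q2) + Ideal.Quotient.mk _ (T (m1 + m2)) * q3
        = q1 + Ideal.Quotient.mk _ (T m1) * (q2 + Ideal.Quotient.mk _ (T m2) * q3)
      rw [T_add, map_mul]
      ring
    · show (m1 + m2) + m3 = m1 + (m2 + m3); ring
  one_mul x := by
    obtain ⟨q, m⟩ := x
    refine Prod.ext ?_ ?_
    · show 0 + Ideal.Quotient.mk _ (T 0) * q = q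
      rw [T_zero, map_one, one_mul, zero_add]
    · show 0 + m = m; ring
  mul_one x := by
    obtain ⟨q, m⟩ := x
    refine Prod.ext ?_ ?_
    · show q + Ideal.Quotient.mk _ (T m) * 0 = q
      rw [mul_zero, add_zero]
    · show m + 0 = m; ring
  inv_mul_cancel x := by
    obtain ⟨q, m⟩ := x
    refine Prod.ext ?_ ?_
    · show -(Ideal.Quotient.mk _ (T (-m)) * q) + Ideal.Quotient.mk _ (T (-m)) * q = 0
      ring
    · show -m + m = 0; ring

noncomputable def wmk (g : LP) (q : LP ⧸ Ideal.span {g}) (m : ℤ) : Wgrp g := (q, m)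

theorem wmk_mul (g : LP) (q1 q2 : LP ⧸ Ideal.span {g}) (m1 m2 : ℤ) :
    wmk g q1 m1 * wmk g q2 m2
      = wmk g (q1 + Ideal.Quotient.mk (Ideal.span {g}) (T m1) * q2) (m1 + m2) := rfl

theorem wmk_one (g : LP) : (1 : Wgrp g) = wmk g 0 0 := rfl

noncomputable def PsiW (J : Set ℕ+) (g : LP) : M J →* Wgrp g where
  toFun x := wmk g (Ideal.Quotient.mk (Ideal.span {g}) x.1) x.2.1
  map_one' := by
    rw [M_one']
    show wmk g (Ideal.Quotient.mk _ (0:LP)) 0 = wmk g 0 0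
    rw [map_zero]
  map_mul' x y := by
    obtain ⟨f1, m1, u1⟩ := x; obtain ⟨f2, m2, u2⟩ := y
    show wmk g (Ideal.Quotient.mk _ (f1 + T m1 * f2)) (m1 + m2) = _
    rw [wmk_mul, map_add, map_mul]

noncomputable def midW (g : LP) : Wgrp g →* Multiplicative ℤ where
  toFun x := Multiplicative.ofAdd x.2
  map_one' := rfl
  map_mul' x y := rfl

theorem wmk_zpow_snd (g : LP) (q : LP ⧸ Ideal.span {g}) (e : ℤ) (k : ℤ) :
    (wmk g q e ^ k).2 = k * e := by
  have h1 : midW g (wmk g q e ^ k) = (Multiplicative.ofAdd e) ^ k := by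
    rw [map_zpow]; rfl
  have h2 : (Multiplicative.ofAdd e) ^ k = Multiplicative.ofAdd (k * e) := by
    rw [← ofAdd_zsmul, smul_eq_mul]
  have h3 : Multiplicative.ofAdd ((wmk g q e ^ k).2) = Multiplicative.ofAdd (k * e) := by
    rw [← h2, ← h1]; rfl
  exact h3

noncomputable def sigma (f : LP) : ZMod 2 := f.coeff.sum fun _ x => x

theorem sigma_zero : sigma 0 = 0 := Finsupp.sum_zero_index

theorem sigma_single (i : ℤ) (x : ZMod 2) : sigma (sg i x) = x :=
  Finsupp.sum_single_index rfl

theorem sigma_add (f g : LP) : sigma (f + g) = sigma f + sigma g :=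
  Finsupp.sum_add_index' (fun _ => rfl) (fun _ _ _ => rfl)

theorem sigma_Tmul (m : ℤ) (f : LP) : sigma ((T m : LP) * f) = sigma f := by
  refine lp_induction (p := fun f => sigma ((T m : LP) * f) = sigma f) f ?_ ?_ ?_
  · beta_reduce; rw [mul_zero]
  · intro f1 f2 h1 h2
    beta_reduce at h1 h2 ⊢
    rw [mul_add, sigma_add, sigma_add, h1, h2]
  · intro i x
    beta_reduce
    rw [T_mul_single, sigma_single, sigma_single]

theorem eps_pos_eq_zero (J : Set ℕ+) (h : ∀ n : ℕ+, eps J (n:ℤ) = 0) :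
    ∀ d : ℤ, 0 < d → eps J d = 0 := by
  intro d hd
  lift d to ℕ using le_of_lt hd with d0
  have hd0 : 0 < d0 := by exact_mod_cast hd
  have := h ⟨d0, hd0⟩
  exact this

theorem cm_eq_zero (J : Set ℕ+) (hJ : ∀ d : ℤ, 0 < d → eps J d = 0) (f g : LP) :
    cm J f g = 0 := by
  revert g
  refine lp_induction (p := fun f => ∀ g, cm J f g = 0) f ?_ ?_ ?_
  · intro g; exact cm_zero_left J g
  · intro f1 f2 h1 h2 g
    rw [cm_add_left, h1, h2, add_zero]
  · intro i x g
    refine lp_induction (p := fun g => cm J (sg i x) g = 0) g ?_ ?_ ?_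
    · exact cm_zero_right J _
    · intro g1 g2 h1 h2
      beta_reduce at h1 h2 ⊢
      rw [cm_add_right, h1, h2, add_zero]
    · intro j y
      beta_reduce
      rw [cm_single_single]
      unfold phi
      rcases lt_or_ge j i with h | h
      · rw [if_pos h, hJ (i - j) (by omega), mul_zero]
      · rw [if_neg (by omega), mul_zero]

theorem eps_eq_zero_mem (J : Set ℕ+) {n : ℕ+} (h : eps J (n:ℤ) = 0) : n ∈ J := by
  by_contra hn
  rw [eps_coe_not_mem J hn] at h
  exact absurd h (by decide)

theorem eps_eq_one_not_mem (J : Set ℕ+) {n : ℕ+} (h : eps J (n:ℤ) = 1) : n ∉ J := by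
  intro hn
  rw [eps_coe_mem J hn] at h
  exact absurd h (by decide)

theorem mk_rel_one (I : Set ℕ+) {r : FreeGroup (Fin 3)} (hr : r ∈ rels I) :
    gmk I r = 1 :=
  (QuotientGroup.eq_one_iff r).mpr (Subgroup.subset_normalClosure hr)

theorem mem_rels_base (I : Set ℕ+) {r : FreeGroup (Fin 3)}
    (hr : r ∈ ({a ^ 2, z ^ 2, ⁅z, a⁆, ⁅z, t⁆} : Set (FreeGroup (Fin 3)))) : r ∈ rels I :=
  Or.inl (Or.inl hr)

theorem grel_a2 (I : Set ℕ+) :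
    gmk I a * gmk I a = 1 := by
  rw [← map_mul, ← pow_two]
  exact mk_rel_one I (mem_rels_base I (by left; rfl))

theorem grel_z2 (I : Set ℕ+) :
    gmk I z * gmk I z = 1 := by
  rw [← map_mul, ← pow_two]
  exact mk_rel_one I (mem_rels_base I (by right; left; rfl))

theorem grel_za (I : Set ℕ+) :
    gmk I z * gmk I a
      = gmk I a * gmk I z := by
  rw [← commutatorElement_eq_one_iff_mul_comm, ← map_commutatorElement]
  exact mk_rel_one I (mem_rels_base I (by right; right; left; rfl))

theorem grel_zt (I : Set ℕ+) :
    gmk I z * gmk I t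
      = gmk I t * gmk I z := by
  rw [← commutatorElement_eq_one_iff_mul_comm, ← map_commutatorElement]
  exact mk_rel_one I (mem_rels_base I (by right; right; right; rfl))

theorem grel_mem (I : Set ℕ+) {n : ℕ+} (hn : n ∈ I) :
    ⁅(gmk I t) ^ (n:ℕ) * gmk I a
      * ((gmk I t) ^ (n:ℕ))⁻¹, gmk I a⁆ = 1 := by
  have := mk_rel_one I (show ⁅t ^ (n : ℕ) * a * (t ^ (n : ℕ))⁻¹, a⁆ ∈ rels I from
    Or.inl (Or.inr ⟨n, hn, rfl⟩))
  rw [map_commutatorElement, map_mul, map_mul, map_inv, map_pow] at this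
  exact this

theorem grel_not_mem (I : Set ℕ+) {n : ℕ+} (hn : n ∉ I) :
    ⁅(gmk I t) ^ (n:ℕ) * gmk I a
      * ((gmk I t) ^ (n:ℕ))⁻¹, gmk I a⁆
      = gmk I z := by
  have := mk_rel_one I (show ⁅t ^ (n : ℕ) * a * (t ^ (n : ℕ))⁻¹, a⁆ * z⁻¹ ∈ rels I from
    Or.inr ⟨n, hn, rfl⟩)
  rw [map_mul, map_inv, map_commutatorElement, map_mul, map_mul, map_inv, map_pow] at this
  exact mul_inv_eq_one.mp this

theorem gz_central (I : Set ℕ+) (x : G I) :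
    gmk I z * x = x * gmk I z := by
  have hmem : x ∈ Subgroup.centralizer ({gmk I z} : Set (G I)) := by
    refine G_gen I _ ?_ ?_ ?_ x
    · rw [Subgroup.mem_centralizer_iff]
      rintro m hm
      rw [Set.mem_singleton_iff] at hm
      rw [hm]
      exact grel_za I
    · rw [Subgroup.mem_centralizer_iff]
      rintro m hm
      rw [Set.mem_singleton_iff] at hm
      rw [hm]
      exact grel_zt I
    · rw [Subgroup.mem_centralizer_iff]
      rintro m hm
      rw [Set.mem_singleton_iff] at hm
      rw [hm]
  exact Subgroup.mem_centralizer_iff.mp hmem _ (Set.mem_singleton _)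

theorem mid_mul (J : Set ℕ+) (x y : M J) : (x * y).2.1 = x.2.1 + y.2.1 := rfl
theorem mid_inv (J : Set ℕ+) (x : M J) : (x⁻¹).2.1 = -x.2.1 := rfl

theorem mid_pow (J : Set ℕ+) (x : M J) (n : ℕ) : (x ^ n).2.1 = n * x.2.1 := by
  induction n with
  | zero => rw [pow_zero]; show (0:ℤ) = 0 * _; ring
  | succ k ih =>
    rw [pow_succ, mid_mul, ih]
    push_cast
    ring

noncomputable def midM (J : Set ℕ+) : M J →* Multiplicative ℤ where
  toFun x := Multiplicative.ofAdd x.2.1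
  map_one' := rfl
  map_mul' _ _ := rfl

theorem eps_mul_pm (J : Set ℕ+) (n : ℕ) {e : ℤ} (he : e = 1 ∨ e = -1) :
    eps J ((n:ℤ) * e) = eps J (n:ℤ) := by
  rcases he with rfl | rfl
  · rw [mul_one]
  · rw [show ((n:ℤ) * (-1)) = -(n:ℤ) from by ring, eps_neg]

noncomputable def Phi (J : Set ℕ+) (v b : ZMod 2) (hc : ∀ f g : LP, cm J f g = 0) :
    M J →* Multiplicative (ZMod 2) where
  toFun x := Multiplicative.ofAdd (x.2.2 + v * sigma x.1 + (x.2.1 : ZMod 2) * b)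
  map_one' := by
    show Multiplicative.ofAdd ((0:ZMod 2) + v * sigma 0 + ((0:ℤ) : ZMod 2) * b) = 1
    rw [sigma_zero, mul_zero, Int.cast_zero, zero_mul, add_zero, add_zero]
    rfl
  map_mul' x y := by
    obtain ⟨f1, m1, u1⟩ := x
    obtain ⟨f2, m2, u2⟩ := y
    show Multiplicative.ofAdd ((u1 + u2 + cm J f1 ((T m1 : LP) * f2)) + v * sigma (f1 + T m1 * f2)
        + ((m1 + m2 : ℤ) : ZMod 2) * b)
      = Multiplicative.ofAdd (u1 + v * sigma f1 + ((m1 : ℤ) : ZMod 2) * b)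
        * Multiplicative.ofAdd (u2 + v * sigma f2 + ((m2 : ℤ) : ZMod 2) * b)
    rw [hc, sigma_add, sigma_Tmul, ← ofAdd_add]
    congr 1
    push_cast
    ring

theorem Phi_apply (J : Set ℕ+) (v b : ZMod 2) (hc : ∀ f g : LP, cm J f g = 0) (x : M J) :
    Phi J v b hc x = Multiplicative.ofAdd (x.2.2 + v * sigma x.1 + (x.2.1 : ZMod 2) * b) := rfl


/-- the groups `G_I` and `G_J` are isomorphic if and only if `I = J`. -/
theorem G_iso_iff_eq (I J : Set ℕ+) : Nonempty (G I ≃* G J) ↔ I = J := by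
  constructor
  · rintro ⟨ψ⟩
    set ρ : G I →* M J := (piJ J).comp ψ.toMonoidHom with hρ
    have hπsurj : Function.Surjective (piJ J) := by
      intro y
      exact M_gen J (piJ J).range ⟨_, piJ_a J⟩ ⟨_, piJ_t J⟩ ⟨_, piJ_z J⟩ y
    have hρsurj : Function.Surjective ρ := by
      intro y
      obtain ⟨w, hw⟩ := hπsurj y
      exact ⟨ψ.symm w, by rw [hρ]; simp [hw]⟩
    set A : M J := ρ (gmk I a) with hA
    set τ : M J := ρ (gmk I t) with hτ
    set Zc : M J := ρ (gmk I z) with hZc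
    -- A has zero middle coordinate
    have hA2 : A * A = 1 := by rw [hA, ← map_mul, grel_a2, map_one]
    have midA : A.2.1 = 0 := by
      have h1 : A.2.1 + A.2.1 = 0 := by
        have := congrArg (fun y : M J => y.2.1) hA2
        exact this
      omega
    -- Zc is central
    have hZcen : ∀ y : M J, Zc * y = y * Zc := by
      intro y
      obtain ⟨x, rfl⟩ := hρsurj y
      rw [hZc, ← map_mul, ← map_mul, gz_central]
    have hZcases : Zc = 1 ∨ Zc = Z0 J :=
      central_form J Zc (hZcen (T0 J)) (hZcen (A0 J))
    -- e = ±1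
    set e : ℤ := τ.2.1 with hedef
    have he : e = 1 ∨ e = -1 := by
      set P1 : Subgroup (G I) :=
        Subgroup.comap ((midM J).comp ρ) (Subgroup.zpowers (Multiplicative.ofAdd e)) with hP1
      have hall : ∀ x : G I, x ∈ P1 := by
        intro x
        refine G_gen I P1 ?_ ?_ ?_ x
        · rw [hP1, Subgroup.mem_comap]
          refine ⟨0, ?_⟩
          show (Multiplicative.ofAdd e) ^ (0:ℤ) = Multiplicative.ofAdd A.2.1
          rw [zpow_zero, midA]
          rfl
        · exact ⟨1, zpow_one _⟩
        · rw [hP1, Subgroup.mem_comap]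
          rcases hZcases with h | h
          · refine ⟨0, ?_⟩
            show (Multiplicative.ofAdd e) ^ (0:ℤ) = Multiplicative.ofAdd Zc.2.1
            rw [zpow_zero, h]
            rfl
          · refine ⟨0, ?_⟩
            show (Multiplicative.ofAdd e) ^ (0:ℤ) = Multiplicative.ofAdd Zc.2.1
            rw [zpow_zero, h]
            rfl
      obtain ⟨xT, hxT⟩ := hρsurj (T0 J)
      have hmem := hall xT
      rw [hP1, Subgroup.mem_comap] at hmem
      obtain ⟨k, hk⟩ := hmem
      beta_reduce at hk
      have hk2 : Multiplicative.ofAdd (k * e) = Multiplicative.ofAdd (1 : ℤ) := by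
        rw [← smul_eq_mul, ofAdd_zsmul, hk]
        show midM J (ρ xT) = _
        rw [hxT]
        rfl
      have hke : e * k = 1 := by
        have := congrArg Multiplicative.toAdd hk2
        simpa using this
      exact Int.isUnit_iff.mp (IsUnit.of_mul_eq_one k hke)
    have hene : e ≠ 0 := by rcases he with h | h <;> omega
    -- A.1 is a unit, hence a monomial
    have hunit : ∃ k : ℤ, A.1 = sg k 1 := by
      apply lp_unit_sg
      set w0 : Wgrp A.1 := PsiW J A.1 τ with hw0
      set P2 : Subgroup (G I) :=
        Subgroup.comap ((PsiW J A.1).comp ρ) (Subgroup.zpowers w0) with hP2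
      have hall : ∀ x : G I, x ∈ P2 := by
        intro x
        refine G_gen I P2 ?_ ?_ ?_ x
        · rw [hP2, Subgroup.mem_comap]
          have hone : PsiW J A.1 A = 1 := by
            show wmk A.1 (Ideal.Quotient.mk (Ideal.span {A.1}) A.1) A.2.1 = 1
            rw [midA, Ideal.Quotient.eq_zero_iff_mem.mpr (Ideal.mem_span_singleton_self A.1),
              wmk_one]
          show PsiW J A.1 (ρ (gmk I a)) ∈ _
          rw [← hA, hone]
          exact one_mem _
        · exact ⟨1, zpow_one _⟩
        · rw [hP2, Subgroup.mem_comap]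
          show PsiW J A.1 (ρ (gmk I z)) ∈ _
          rw [← hZc]
          rcases hZcases with h | h
          · rw [h, map_one]; exact one_mem _
          · have hone : PsiW J A.1 (Z0 J) = 1 := by
              show wmk A.1 (Ideal.Quotient.mk (Ideal.span {A.1}) 0) 0 = 1
              rw [map_zero, wmk_one]
            rw [h, hone]; exact one_mem _
      have hq0 : ∀ r : LP, Ideal.Quotient.mk (Ideal.span {A.1}) r = 0 := by
        intro r
        obtain ⟨xr, hxr⟩ := hρsurj (mk3 J r 0 0)
        have hmem := hall xr
        rw [hP2, Subgroup.mem_comap] at hmem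
        obtain ⟨k, hk⟩ := hmem
        beta_reduce at hk
        have hsnd : (w0 ^ k).2 = 0 := by
          rw [hk]
          show ((PsiW J A.1) (ρ xr)).2 = 0
          rw [hxr]
          rfl
        have hk0 : k = 0 := by
          have h2 : (w0 ^ k).2 = k * e := by
            rw [hw0]
            exact wmk_zpow_snd A.1 _ e k
          rw [h2] at hsnd
          exact (mul_eq_zero.mp hsnd).resolve_right hene
        rw [hk0, zpow_zero] at hk
        rw [MonoidHom.comp_apply, hxr] at hk
        exact (congrArg Prod.fst hk).symm
      have h1 : (1 : LP) ∈ Ideal.span {A.1} := Ideal.Quotient.eq_zero_iff_mem.mp (hq0 1)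
      obtain ⟨u, hu⟩ := Ideal.mem_span_singleton'.mp h1
      exact IsUnit.of_mul_eq_one u (by rw [mul_comm]; exact hu)
    obtain ⟨k, hsgk⟩ := hunit
    -- the key commutator computation
    have key : ∀ n : ℕ+,
        ρ ⁅(gmk I t) ^ ((n:ℕ)) * gmk I a * ((gmk I t) ^ ((n:ℕ)))⁻¹, gmk I a⁆
          = mk3 J 0 0 (eps J (n:ℤ)) := by
      intro n
      rw [map_commutatorElement, map_mul, map_mul, map_inv, map_pow, ← hA, ← hτ]
      have hAeq : A = mk3 J (sg k 1) 0 A.2.2 :=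
        Prod.ext hsgk (Prod.ext midA rfl)
      obtain ⟨s, hs⟩ := mk3_conj J (τ ^ (n:ℕ)) (sg k 1) A.2.2
      have hmidτ : (τ ^ (n:ℕ)).2.1 = (n:ℕ) * e := mid_pow J τ (n:ℕ)
      rw [hmidτ, T_mul_single] at hs
      rw [hAeq, hs, mk3_comm, B_single]
      rw [show ((n:ℕ) * e + k - k) = (n:ℕ) * e from by ring, eps_mul_pm J (n:ℕ) he]
    -- case analysis on Zc
    rcases hZcases with hZ1 | hZ0
    · -- Zc = 1 : contradiction
      exfalso
      have hJ0 : ∀ n : ℕ+, eps J (n:ℤ) = 0 := by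
        intro n
        by_cases hn : n ∈ I
        · have h2 := congrArg ρ (grel_mem I hn)
          rw [key n, map_one, M_one'] at h2
          exact (mk3_inj J h2).2.2
        · have h2 := congrArg ρ (grel_not_mem I hn)
          rw [key n, ← hZc, hZ1, M_one'] at h2
          exact (mk3_inj J h2).2.2
      have hc : ∀ f g : LP, cm J f g = 0 := cm_eq_zero J (eps_pos_eq_zero J hJ0)
      set vA : ZMod 2 := A.2.2 with hvA
      set b : ZMod 2 := τ.2.2 + vA * sigma τ.1 with hb
      set Φ : M J →* Multiplicative (ZMod 2) := Phi J vA b hc with hΦ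
      have hall : ∀ x : G I, x ∈ (Φ.comp ρ).ker := by
        intro x
        refine G_gen I _ ?_ ?_ ?_ x
        · rw [MonoidHom.mem_ker]
          show Φ A = 1
          rw [hΦ, Phi_apply, hsgk, midA, sigma_single, mul_one, Int.cast_zero, zero_mul,
            add_zero, ← hvA, z2_add_self]
          rfl
        · rw [MonoidHom.mem_ker]
          show Φ τ = 1
          have hcast : ((e : ℤ) : ZMod 2) = 1 := by
            rcases he with h | h <;> rw [h] <;> decide
          rw [hΦ, Phi_apply, ← hedef, hcast, one_mul,
            show τ.2.2 + vA * sigma τ.1 + b = b + b from by rw [hb], z2_add_self]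
          rfl
        · rw [MonoidHom.mem_ker]
          show Φ Zc = 1
          rw [hZ1, map_one]
      obtain ⟨x0, hx0⟩ := hρsurj (Z0 J)
      have hker := hall x0
      rw [MonoidHom.mem_ker] at hker
      have hval : Φ (Z0 J) = 1 := by rw [← hx0]; exact hker
      have hcomp : (1 : ZMod 2) + vA * sigma 0 + ((0:ℤ) : ZMod 2) * b = 1 := by
        rw [sigma_zero, mul_zero, Int.cast_zero, zero_mul, add_zero, add_zero]
      have hPhiZ0 : Φ (Z0 J) = Multiplicative.ofAdd (1 : ZMod 2) := by
        rw [hΦ]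
        show Multiplicative.ofAdd ((1:ZMod 2) + vA * sigma 0 + ((0:ℤ) : ZMod 2) * b) = _
        rw [hcomp]
      rw [hval] at hPhiZ0
      have h10 : (1 : ZMod 2) = 0 := by
        have := congrArg Multiplicative.toAdd hPhiZ0
        simpa using this.symm
      exact absurd h10 (by decide)
    · -- Zc = Z0 : I = J
      ext n
      constructor
      · intro hn
        have h2 := congrArg ρ (grel_mem I hn)
        rw [key n, map_one, M_one'] at h2
        exact eps_eq_zero_mem J (mk3_inj J h2).2.2
      · intro hn
        by_contra hnI
        have h2 := congrArg ρ (grel_not_mem I hnI)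
        rw [key n, ← hZc, hZ0, Z0_eq] at h2
        have heps : eps J (n:ℤ) = 1 := (mk3_inj J h2).2.2
        exact eps_eq_one_not_mem J heps hn
  · rintro rfl
    exact ⟨MulEquiv.refl _⟩


end Stmt6
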